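/- arXiv:2303.07382 — 4 statements merged into one kernel-verified Lean document; each statement's English description precedes it below -/
import Mathlib

section
/- Let γpp, γmm, γpm ≥ 0 with Γ = γpp + γmm + 2γpm > 0, and let f ∈ L²(ℝ, ℂ) with ∫_ℝ |f|² = 1. Then the transmission probability of a frequency-matched two-photon input, T = ∫_ℝ |f(ω̄)|² · |1 − γpp/(Γ/2 + i(ω₀ − ω̄))|² dω̄, satisfies T ≥ 1 − 4γpp γmm/Γ² − 8γpp γpm/Γ². -/
open MeasureTheory

lemma pointwise_bound (γpp Γ : ℝ) (hpp : 0 ≤ γpp) (hle : γpp ≤ Γ) (hΓpos : 0 < Γ) (x : ℝ) :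
    (Γ - 2 * γpp) ^ 2 / Γ ^ 2
      ≤ ‖(1 - (γpp : ℂ) / ((Γ : ℂ) / 2 + Complex.I * (x : ℂ)))‖ ^ 2 := by
  set D : ℂ := (Γ : ℂ) / 2 + Complex.I * (x : ℂ) with hDdef
  have hre : D.re = Γ / 2 := by simp [hDdef]
  have him : D.im = x := by simp [hDdef]
  have hD : D ≠ 0 := by
    intro h
    rw [h] at hre
    simp at hre
    linarith
  have h1 : (1 : ℂ) - (γpp : ℂ) / D = (D - γpp) / D := by
    field_simp
  rw [h1, norm_div, div_pow, Complex.sq_norm, Complex.sq_norm]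
  have hnsD : Complex.normSq D = (Γ / 2) ^ 2 + x ^ 2 := by
    rw [Complex.normSq_apply, hre, him]; ring
  have hnsN : Complex.normSq (D - γpp) = (Γ / 2 - γpp) ^ 2 + x ^ 2 := by
    rw [Complex.normSq_apply]
    simp [hre, him, Complex.sub_re, Complex.sub_im]
    ring
  rw [hnsD, hnsN]
  rw [div_le_div_iff₀ (by positivity) (by positivity)]
  nlinarith [sq_nonneg x, sq_nonneg (Γ - 2*γpp), mul_nonneg (mul_nonneg hpp (sub_nonneg.2 hle)) (sq_nonneg x)]

lemma abs_bound (γpp Γ ω₀ : ℝ) (hpp : 0 ≤ γpp) (hΓpos : 0 < Γ) (ω : ℝ) :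
    ‖(1 - (γpp : ℂ) / ((Γ : ℂ) / 2 + Complex.I * ((ω₀ : ℂ) - (ω : ℂ))))‖ ^ 2
      ≤ (1 + γpp / (Γ / 2)) ^ 2 := by
  set D : ℂ := (Γ : ℂ) / 2 + Complex.I * ((ω₀ : ℂ) - (ω : ℂ)) with hDdef
  have habsD : Γ / 2 ≤ ‖D‖ := by
    have : |D.re| ≤ ‖D‖ := Complex.abs_re_le_norm D
    have hre : D.re = Γ / 2 := by simp [hDdef]
    rw [hre] at this
    calc Γ / 2 ≤ |Γ / 2| := le_abs_self _
    _ ≤ _ := this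
  have h1 : ‖(1 - (γpp : ℂ) / D)‖ ≤ 1 + γpp / (Γ / 2) := by
    calc ‖(1 - (γpp : ℂ) / D)‖ ≤ ‖(1 : ℂ)‖ + ‖((γpp : ℂ) / D)‖ :=
          norm_sub_le _ _
    _ = 1 + γpp / ‖D‖ := by
          rw [norm_div, norm_one, Complex.norm_of_nonneg hpp]
    _ ≤ 1 + γpp / (Γ / 2) := by
          gcongr
  have h0 : 0 ≤ ‖(1 - (γpp : ℂ) / D)‖ := norm_nonneg _
  nlinarith

/-- Lower bound on the transmission probability of a frequency-matched two-photon
input: `T ≥ 1 − R_max − S_max = 1 − 4γ⁺⁺γ⁻⁻/Γ² − 8γ⁺⁺γ⁺⁻/Γ²`. -/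
theorem transmission_probability_lower_bound (ω₀ γpp γmm γpm : ℝ)
    (hpp : 0 ≤ γpp) (hmm : 0 ≤ γmm) (hpm : 0 ≤ γpm)
    (Γ : ℝ) (hΓdef : Γ = γpp + γmm + 2 * γpm) (hΓpos : 0 < Γ)
    (f : ℝ → ℂ) (hf2 : MemLp f 2 (volume : Measure ℝ))
    (hf : (∫ ω : ℝ, ‖f ω‖ ^ 2) = 1) :
    1 - 4 * γpp * γmm / Γ ^ 2 - 8 * γpp * γpm / Γ ^ 2
      ≤ ∫ ω : ℝ, ‖f ω‖ ^ 2 *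
          ‖(1 - (γpp : ℂ) / ((Γ : ℂ) / 2 + Complex.I * ((ω₀ : ℂ) - (ω : ℂ))))‖ ^ 2 := by
  have hle : γpp ≤ Γ := by rw [hΓdef]; linarith
  set c : ℝ := (Γ - 2 * γpp) ^ 2 / Γ ^ 2 with hc
  have hcval : 1 - 4 * γpp * γmm / Γ ^ 2 - 8 * γpp * γpm / Γ ^ 2 = c := by
    rw [hc]
    field_simp
    rw [hΓdef]; ring
  -- integrability of ‖f‖²
  have hint : Integrable (fun ω : ℝ => ‖f ω‖ ^ 2) := by
    have := hf2.integrable_norm_rpow (by norm_num) (by norm_num)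
    simpa [ENNReal.toReal_ofNat, Real.rpow_natCast] using this
  -- continuity of g
  set g : ℝ → ℝ := fun ω =>
    ‖(1 - (γpp : ℂ) / ((Γ : ℂ) / 2 + Complex.I * ((ω₀ : ℂ) - (ω : ℂ))))‖ ^ 2 with hg
  have hgcont : Continuous g := by
    apply Continuous.pow
    apply continuous_norm.comp
    apply Continuous.sub continuous_const
    apply Continuous.div continuous_const
    · fun_prop
    · intro ω h
      have : ((Γ : ℂ) / 2 + Complex.I * ((ω₀ : ℂ) - (ω : ℂ))).re = Γ / 2 := by simp
      rw [h] at this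
      simp at this
      linarith
  have hintg : Integrable (fun ω : ℝ => ‖f ω‖ ^ 2 * g ω) := by
    have := Integrable.bdd_mul (f := g) (g := fun ω : ℝ => ‖f ω‖ ^ 2) hint
      hgcont.aestronglyMeasurable
      (c := (1 + γpp / (Γ / 2)) ^ 2) (Filter.Eventually.of_forall fun ω => by
        rw [Real.norm_eq_abs, abs_of_nonneg (by positivity)]
        exact abs_bound γpp Γ ω₀ hpp hΓpos ω)
    simpa [mul_comm] using this
  rw [hcval]
  calc c = ∫ ω : ℝ, c * ‖f ω‖ ^ 2 := by
        rw [integral_const_mul, hf, mul_one]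
  _ ≤ ∫ ω : ℝ, ‖f ω‖ ^ 2 * g ω := by
        apply integral_mono (hint.const_mul c) hintg
        intro ω
        have h := pointwise_bound γpp Γ hpp hle hΓpos (ω₀ - ω)
        push_cast at h
        show c * ‖f ω‖ ^ 2 ≤ ‖f ω‖ ^ 2 * g ω
        rw [mul_comm (‖f ω‖ ^ 2)]
        exact mul_le_mul_of_nonneg_right h (by positivity)
  _ = _ := rfl
end

section
/- Let ω₀ ∈ ℝ and let f ∈ L²(ℝ, ℂ) with ∫_ℝ |f|² = 1. Define, for Γ > 0, η(Γ) = ∫_ℝ |f(ω̄)|² · (1 − Γ/(Γ/2 + i(ω₀ − ω̄))) dω̄. Then η(Γ) → −1 as Γ → ∞. (The two-photon overlap ⟨1_c 1_s | 1̃_c 1̃_s⟩ between the ideal and actual scattered states tends to −1 in the limit where the emitter linewidth Γ greatly exceeds the input bandwidth.) -/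
open MeasureTheory Filter

/-- The two-photon overlap `η(Γ) = ∫ |f(ω̄)|² (1 − Γ/(Γ/2 + i(ω₀−ω̄))) dω̄` between
the ideal and actual scattered states tends to `−1` as the emitter linewidth `Γ`
greatly exceeds the input bandwidth. -/
theorem overlap_tendsto_neg_one (ω₀ : ℝ) (f : ℝ → ℂ)
    (hf2 : MemLp f 2 (volume : Measure ℝ))
    (hf : (∫ ω : ℝ, ‖f ω‖ ^ 2) = 1) :
    Tendsto (fun Γ : ℝ => ∫ ω : ℝ, (‖f ω‖ ^ 2 : ℂ)
        * (1 - (Γ : ℂ) / ((Γ : ℂ) / 2 + Complex.I * ((ω₀ : ℂ) - (ω : ℂ)))))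
      atTop (nhds (-1)) := by
  have hbound : Integrable (fun ω : ℝ => ‖f ω‖ ^ 2) volume :=
    (memLp_two_iff_integrable_sq_norm hf2.1).1 hf2
  have hne : ∀ (Γ : ℝ), 0 < Γ → ∀ ω : ℝ,
      ((Γ : ℂ) / 2 + Complex.I * ((ω₀ : ℂ) - (ω : ℂ))) ≠ 0 := by
    intro Γ hΓ ω h
    have := congrArg Complex.re h
    simp [Complex.add_re, Complex.div_re] at this
    linarith
  have key : Tendsto (fun Γ : ℝ => ∫ ω : ℝ, (‖f ω‖ ^ 2 : ℂ)
        * (1 - (Γ : ℂ) / ((Γ : ℂ) / 2 + Complex.I * ((ω₀ : ℂ) - (ω : ℂ)))))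
      atTop (nhds (∫ ω : ℝ, -(‖f ω‖ ^ 2 : ℂ))) := by
    apply tendsto_integral_filter_of_dominated_convergence (fun ω => ‖f ω‖ ^ 2)
    · filter_upwards [eventually_gt_atTop (0:ℝ)] with Γ hΓ
      apply AEStronglyMeasurable.mul
      · exact (Complex.continuous_ofReal.comp_aestronglyMeasurable hf2.1.norm).pow 2
      · apply Continuous.aestronglyMeasurable
        apply Continuous.sub continuous_const
        exact continuous_const.div (by continuity) (fun ω => hne Γ hΓ ω)
    · filter_upwards [eventually_gt_atTop (0:ℝ)] with Γ hΓ
      filter_upwards with ω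
      set K : ℂ := (ω₀ : ℂ) - (ω : ℂ)
      have hd : ((Γ : ℂ) / 2 + Complex.I * K) ≠ 0 := hne Γ hΓ ω
      have heq : 1 - (Γ : ℂ) / ((Γ : ℂ) / 2 + Complex.I * K)
          = (-(Γ : ℂ) / 2 + Complex.I * K) / ((Γ : ℂ) / 2 + Complex.I * K) := by
        rw [eq_comm, div_eq_iff hd, sub_mul, one_mul, div_mul_cancel₀ _ hd]
        ring
      have hnorm : ‖1 - (Γ : ℂ) / ((Γ : ℂ) / 2 + Complex.I * K)‖ = 1 := by
        rw [heq, norm_div]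
        rw [div_eq_one_iff_eq (norm_ne_zero_iff.mpr hd)]
        rw [Complex.norm_def,
          Complex.norm_def, Complex.normSq_apply, Complex.normSq_apply]
        simp [K]
        ring_nf
      rw [norm_mul, hnorm, mul_one]
      simp
    · exact hbound
    · filter_upwards with ω
      set K : ℂ := (ω₀ : ℂ) - (ω : ℂ)
      have h1 : Tendsto (fun Γ : ℝ => ((Γ : ℂ))⁻¹) atTop (nhds 0) := by
        have h2 := (Complex.continuous_ofReal.tendsto 0).comp tendsto_inv_atTop_zero
        simp only [Function.comp_def, Complex.ofReal_inv, Complex.ofReal_zero] at h2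
        exact h2
      have h2 : Tendsto (fun Γ : ℝ => ((2:ℂ))⁻¹ + Complex.I * K * ((Γ : ℂ))⁻¹)
          atTop (nhds ((2:ℂ))⁻¹) := by
        have := (tendsto_const_nhds.mul h1 :
          Tendsto (fun Γ : ℝ => Complex.I * K * ((Γ : ℂ))⁻¹) atTop (nhds (Complex.I * K * 0)))
        simpa using tendsto_const_nhds.add this
      have h3 : Tendsto (fun Γ : ℝ => (Γ : ℂ) / ((Γ : ℂ) / 2 + Complex.I * K))
          atTop (nhds 2) := by
        have h4 : Tendsto (fun Γ : ℝ => (((2:ℂ))⁻¹ + Complex.I * K * ((Γ : ℂ))⁻¹)⁻¹)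
            atTop (nhds (((2:ℂ))⁻¹)⁻¹) := h2.inv₀ (by norm_num)
        rw [inv_inv] at h4
        apply h4.congr'
        filter_upwards [eventually_gt_atTop (0:ℝ)] with Γ hΓ
        have hΓ' : (Γ : ℂ) ≠ 0 := by exact_mod_cast hΓ.ne'
        field_simp
      have h5 : Tendsto (fun Γ : ℝ => (1 : ℂ) - (Γ : ℂ) / ((Γ : ℂ) / 2 + Complex.I * K))
          atTop (nhds (1 - 2)) := tendsto_const_nhds.sub h3
      have : (1 : ℂ) - 2 = -1 := by norm_num
      rw [this] at h5
      have := (tendsto_const_nhds (x := (‖f ω‖ ^ 2 : ℂ))).mul h5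
      simpa using this
  have hval : (∫ ω : ℝ, -(‖f ω‖ ^ 2 : ℂ)) = -1 := by
    rw [integral_neg]
    have : (∫ ω : ℝ, ((‖f ω‖ ^ 2 : ℝ) : ℂ)) = ((∫ ω : ℝ, ‖f ω‖ ^ 2 : ℝ) : ℂ) :=
      integral_ofReal
    push_cast at this ⊢
    rw [this, hf]
    norm_num
  rwa [hval] at key
end

section
/- Let ω₀ ∈ ℝ and f ∈ L²(ℝ, ℂ) with ∫_ℝ |f|² = 1, and set η(Γ) = ∫_ℝ |f(ω̄)|² (1 − Γ/(Γ/2 + i(ω₀ − ω̄))) dω̄ for Γ > 0. Then the worst-case controlled-phase gate fidelity F(Γ) = min_{t ∈ [0,1]} |1 − t(1 + η(Γ))|² tends to 1 as Γ → ∞. (A single quadratically coupled two-level emitter implements a deterministic controlled-phase gate on propagating photons with fidelity approaching unity in the narrow-input limit, circumventing the no-go theorem valid for linear light-matter couplings.) -/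
open MeasureTheory Filter

/-- The worst-case controlled-phase gate fidelity
`F(Γ) = min_{t∈[0,1]} |1 − t(1 + η(Γ))|²`, with
`η(Γ) = ∫ |f(ω̄)|² (1 − Γ/(Γ/2 + i(ω₀−ω̄))) dω̄`, tends to `1` as `Γ → ∞`:
a single quadratically coupled emitter implements an ideal controlled-phase
gate in the narrow-input limit. -/
theorem cphase_gate_fidelity_tendsto_one (ω₀ : ℝ) (f : ℝ → ℂ)
    (hf2 : MemLp f 2 (volume : Measure ℝ))
    (hf : (∫ ω : ℝ, ‖f ω‖ ^ 2) = 1) :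
    Tendsto (fun Γ : ℝ =>
        sInf { v : ℝ | ∃ t ∈ Set.Icc (0 : ℝ) 1,
          v = ‖(1 - (t : ℂ) * (1 + ∫ ω : ℝ, (‖f ω‖ ^ 2 : ℂ)
                * (1 - (Γ : ℂ) / ((Γ : ℂ) / 2 + Complex.I * ((ω₀ : ℂ) - (ω : ℂ))))))‖ ^ 2 })
      atTop (nhds 1) := by
  have hint : Integrable (fun ω : ℝ => ‖f ω‖ ^ 2) volume :=
    (memLp_two_iff_integrable_sq_norm hf2.aestronglyMeasurable).1 hf2
  -- the key limit of the integral
  have hden : ∀ Γ : ℝ, 0 < Γ → ∀ ω : ℝ,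
      (Γ : ℂ) / 2 + Complex.I * ((ω₀ : ℂ) - (ω : ℂ)) ≠ 0 := by
    intro Γ hΓ ω h
    have := congrArg Complex.re h
    simp [Complex.add_re, Complex.div_re] at this
    · linarith
  have key : Tendsto (fun Γ : ℝ => ∫ ω : ℝ, (‖f ω‖ ^ 2 : ℂ)
      * (1 - (Γ : ℂ) / ((Γ : ℂ) / 2 + Complex.I * ((ω₀ : ℂ) - (ω : ℂ)))))
      atTop (nhds (-1 : ℂ)) := by
    have hlim : ∫ ω : ℝ, -((‖f ω‖ : ℂ) ^ 2) = -1 := by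
      rw [integral_neg]
      have hfe : (fun ω : ℝ => ((‖f ω‖ : ℂ) ^ 2)) = fun ω : ℝ => ((‖f ω‖ ^ 2 : ℝ) : ℂ) := by
        push_cast; rfl
      rw [hfe]
      have h2 : ∫ ω : ℝ, ((‖f ω‖ ^ 2 : ℝ) : ℂ) = ((∫ ω : ℝ, ‖f ω‖ ^ 2 : ℝ) : ℂ) :=
        integral_ofReal
      rw [h2, hf]; norm_num
    rw [← hlim]
    apply tendsto_integral_filter_of_dominated_convergence
      (fun ω : ℝ => 3 * ‖f ω‖ ^ 2)
    · filter_upwards [eventually_gt_atTop (0 : ℝ)] with Γ hΓ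
      apply AEStronglyMeasurable.mul
      · exact ((Complex.continuous_ofReal.comp_aestronglyMeasurable
          hf2.aestronglyMeasurable.norm).pow 2)
      · apply Continuous.aestronglyMeasurable
        apply Continuous.sub continuous_const
        apply Continuous.div continuous_const
        · fun_prop
        · exact hden Γ hΓ
    · filter_upwards [eventually_gt_atTop (0 : ℝ)] with Γ hΓ
      filter_upwards with ω
      have h1 : ‖(Γ : ℂ) / ((Γ : ℂ) / 2 + Complex.I * ((ω₀ : ℂ) - (ω : ℂ)))‖ ≤ 2 := by
        rw [norm_div]
        have hre : Γ / 2 ≤ ‖(Γ : ℂ) / 2 + Complex.I * ((ω₀ : ℂ) - (ω : ℂ))‖ := by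
          have := Complex.abs_re_le_norm ((Γ : ℂ) / 2 + Complex.I * ((ω₀ : ℂ) - (ω : ℂ)))
          have hre2 : ((Γ : ℂ) / 2 + Complex.I * ((ω₀ : ℂ) - (ω : ℂ))).re = Γ / 2 := by
            simp
          rw [hre2] at this
          calc Γ / 2 ≤ |Γ / 2| := le_abs_self _
          _ ≤ _ := this
        rw [div_le_iff₀ (by linarith)]
        have : ‖(Γ : ℂ)‖ = Γ := by simp [abs_of_pos hΓ]
        rw [this]; linarith
      calc ‖(‖f ω‖ ^ 2 : ℂ) * (1 - (Γ : ℂ) / ((Γ : ℂ) / 2 + Complex.I * ((ω₀ : ℂ) - (ω : ℂ))))‖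
          = ‖f ω‖ ^ 2 * ‖(1 - (Γ : ℂ) / ((Γ : ℂ) / 2 + Complex.I * ((ω₀ : ℂ) - (ω : ℂ))))‖ := by
            rw [norm_mul]; simp
        _ ≤ ‖f ω‖ ^ 2 * 3 := by
            apply mul_le_mul_of_nonneg_left _ (by positivity)
            calc ‖(1 : ℂ) - (Γ : ℂ) / ((Γ : ℂ) / 2 + Complex.I * ((ω₀ : ℂ) - (ω : ℂ)))‖
                ≤ ‖(1 : ℂ)‖ + ‖(Γ : ℂ) / ((Γ : ℂ) / 2 + Complex.I * ((ω₀ : ℂ) - (ω : ℂ)))‖ :=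
                  norm_sub_le _ _
              _ ≤ 1 + 2 := by rw [norm_one]; linarith
              _ = 3 := by norm_num
        _ = 3 * ‖f ω‖ ^ 2 := by ring
    · exact hint.const_mul 3
    · filter_upwards with ω
      have hc : Tendsto (fun Γ : ℝ => Complex.I * ((ω₀ : ℂ) - (ω : ℂ)) / (Γ : ℂ))
          atTop (nhds 0) := by
        have h0 : Tendsto (fun Γ : ℝ => ((Γ⁻¹ : ℝ) : ℂ)) atTop (nhds ((0 : ℝ) : ℂ)) :=
          (Complex.continuous_ofReal.tendsto 0).comp tendsto_inv_atTop_zero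
        have := h0.const_mul (Complex.I * ((ω₀ : ℂ) - (ω : ℂ)))
        simp only [Complex.ofReal_zero, mul_zero] at this
        apply this.congr' _
        filter_upwards [eventually_gt_atTop (0 : ℝ)] with Γ hΓ
        rw [div_eq_mul_inv]
        push_cast
        ring
      have hfrac : Tendsto (fun Γ : ℝ =>
          (Γ : ℂ) / ((Γ : ℂ) / 2 + Complex.I * ((ω₀ : ℂ) - (ω : ℂ)))) atTop (nhds 2) := by
        have h2 : Tendsto (fun Γ : ℝ =>
            (1 : ℂ) / (1 / 2 + Complex.I * ((ω₀ : ℂ) - (ω : ℂ)) / (Γ : ℂ)))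
            atTop (nhds ((1 : ℂ) / (1 / 2 + 0))) := by
          apply Tendsto.div tendsto_const_nhds (tendsto_const_nhds.add hc)
          norm_num
        have h3 : ((1 : ℂ) / (1 / 2 + 0)) = 2 := by norm_num
        rw [h3] at h2
        apply h2.congr'
        filter_upwards [eventually_gt_atTop (0 : ℝ)] with Γ hΓ
        have hΓ' : (Γ : ℂ) ≠ 0 := by
          simpa using ne_of_gt hΓ
        rcases eq_or_ne ((Γ : ℂ) / 2 + Complex.I * ((ω₀ : ℂ) - (ω : ℂ))) 0 with h | h
        · exfalso; exact hden Γ hΓ ω h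
        · field_simp
      have := ((tendsto_const_nhds (x := (1 : ℂ))).sub hfrac).const_mul ((‖f ω‖ : ℂ) ^ 2)
      simp only [show (1 : ℂ) - 2 = -1 by norm_num, mul_neg_one] at this
      exact this
  -- the norm of 1 + η tends to 0
  have hz : Tendsto (fun Γ : ℝ => ‖(1 : ℂ) + ∫ ω : ℝ, (‖f ω‖ ^ 2 : ℂ)
      * (1 - (Γ : ℂ) / ((Γ : ℂ) / 2 + Complex.I * ((ω₀ : ℂ) - (ω : ℂ))))‖)
      atTop (nhds 0) := by
    have := (tendsto_const_nhds (x := (1 : ℂ)).add key).norm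
    simpa using this
  -- squeeze
  have hL : Tendsto (fun Γ : ℝ => (1 - ‖(1 : ℂ) + ∫ ω : ℝ, (‖f ω‖ ^ 2 : ℂ)
      * (1 - (Γ : ℂ) / ((Γ : ℂ) / 2 + Complex.I * ((ω₀ : ℂ) - (ω : ℂ))))‖) ^ 2)
      atTop (nhds 1) := by
    have := (tendsto_const_nhds (x := (1 : ℝ)).sub hz).pow 2
    simpa using this
  apply tendsto_of_tendsto_of_tendsto_of_le_of_le' hL tendsto_const_nhds
  · -- lower bound eventually
    filter_upwards [hz.eventually_le_const (show (0:ℝ) < 1 by norm_num)] with Γ hΓ1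
    refine le_csInf ⟨1, 0, ⟨le_refl 0, zero_le_one⟩, by simp⟩ ?_
    rintro v ⟨t, ⟨ht0, ht1⟩, rfl⟩
    set z := (1 : ℂ) + ∫ ω : ℝ, (‖f ω‖ ^ 2 : ℂ)
        * (1 - (Γ : ℂ) / ((Γ : ℂ) / 2 + Complex.I * ((ω₀ : ℂ) - (ω : ℂ)))) with hzdef
    have htz : ‖(t : ℂ) * z‖ ≤ ‖z‖ := by
      rw [norm_mul, Complex.norm_real, Real.norm_eq_abs, abs_of_nonneg ht0]
      calc t * ‖z‖ ≤ 1 * ‖z‖ := by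
            apply mul_le_mul_of_nonneg_right ht1 (norm_nonneg _)
        _ = ‖z‖ := one_mul _
    have h1 : 1 - ‖z‖ ≤ ‖1 - (t : ℂ) * z‖ := by
      have := norm_sub_norm_le (1 : ℂ) ((t : ℂ) * z)
      rw [norm_one] at this
      linarith
    exact pow_le_pow_left₀ (by linarith) h1 2
  · -- upper bound: sInf ≤ 1, via t = 0
    filter_upwards with Γ
    apply csInf_le
    · refine ⟨0, ?_⟩
      rintro v ⟨t, ht, rfl⟩
      positivity
    · exact ⟨0, ⟨le_refl 0, zero_le_one⟩, by simp⟩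
end

section
/- Fix Γ > 0. For β, δ > 0 let u_β(Δ) = √((1/π)β/(β²/4 + Δ²)) and define the vector v(β, δ) = (a₊, b, b, a₋) ∈ ℂ⁴, where a± = u_β(0)/(Γ/2 ± 2iδ) and b = u_β(2δ)/(Γ/2). Then lim_{δ→∞} lim_{β→0⁺} |a₊ − a₋|² / (2 ‖v(β,δ)‖²) = 1, i.e. in the iterated limit β/Γ → 0 followed by δ/Γ → ∞ the normalized post-selected two-photon state converges (up to a global phase) to the Bell state ψ⁻ = (|ω_a, ω_a⟩ − |ω_b, ω_b⟩)/√2. -/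
open Real Filter

/-- Lorentzian coupling envelope `u_β(Δ) = √((1/π) β/(β²/4 + Δ²))`. -/
noncomputable def lorentzEnvelope (β Δ : ℝ) : ℝ :=
  Real.sqrt ((1 / π) * (β / (β ^ 2 / 4 + Δ ^ 2)))

/-- Diagonal amplitude `a₊ = u_β(0)/(Γ/2 + 2iδ)` of the post-selected pair. -/
noncomputable def aPlus (Γ β δ : ℝ) : ℂ :=
  (lorentzEnvelope β 0 : ℂ) / ((Γ : ℂ) / 2 + 2 * Complex.I * (δ : ℂ))

/-- Diagonal amplitude `a₋ = u_β(0)/(Γ/2 − 2iδ)` of the post-selected pair. -/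
noncomputable def aMinus (Γ β δ : ℝ) : ℂ :=
  (lorentzEnvelope β 0 : ℂ) / ((Γ : ℂ) / 2 - 2 * Complex.I * (δ : ℂ))

/-- Off-diagonal amplitude `b = u_β(2δ)/(Γ/2)` of the post-selected pair. -/
noncomputable def bAmp (Γ β δ : ℝ) : ℂ :=
  (lorentzEnvelope β (2 * δ) : ℂ) / ((Γ : ℂ) / 2)

/-- The post-selected two-photon amplitude vector `v = (a₊, b, b, a₋) ∈ ℂ⁴`. -/
noncomputable def postVec (Γ β δ : ℝ) : EuclideanSpace ℂ (Fin 4) :=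
  (WithLp.equiv 2 (Fin 4 → ℂ)).symm ![aPlus Γ β δ, bAmp Γ β δ, bAmp Γ β δ, aMinus Γ β δ]

lemma cplus_ne (Γ δ : ℝ) (hΓ : 0 < Γ) : ((Γ : ℂ) / 2 + 2 * Complex.I * (δ : ℂ)) ≠ 0 := by
  intro h
  have h2 := congrArg Complex.re h
  simp [Complex.add_re, Complex.div_re, Complex.mul_re] at h2
  linarith

lemma cminus_ne (Γ δ : ℝ) (hΓ : 0 < Γ) : ((Γ : ℂ) / 2 - 2 * Complex.I * (δ : ℂ)) ≠ 0 := by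
  intro h
  have h2 := congrArg Complex.re h
  simp [Complex.sub_re, Complex.div_re, Complex.mul_re] at h2
  linarith

lemma normSq_cplus (Γ δ : ℝ) : Complex.normSq ((Γ : ℂ) / 2 + 2 * Complex.I * (δ : ℂ)) = Γ^2/4 + 4*δ^2 := by
  simp [Complex.normSq_apply]; ring

lemma normSq_cminus (Γ δ : ℝ) : Complex.normSq ((Γ : ℂ) / 2 - 2 * Complex.I * (δ : ℂ)) = Γ^2/4 + 4*δ^2 := by
  simp [Complex.normSq_apply]; ring

lemma abs_diff_sq (Γ β δ : ℝ) (hΓ : 0 < Γ) :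
    ‖aPlus Γ β δ - aMinus Γ β δ‖ ^ 2
      = lorentzEnvelope β 0 ^ 2 * (16 * δ^2) / ((Γ^2/4 + 4*δ^2) * (Γ^2/4 + 4*δ^2)) := by
  set cp := ((Γ : ℂ) / 2 + 2 * Complex.I * (δ : ℂ)) with hcp
  set cm := ((Γ : ℂ) / 2 - 2 * Complex.I * (δ : ℂ)) with hcm
  have key : aPlus Γ β δ - aMinus Γ β δ
      = (lorentzEnvelope β 0 : ℂ) * ((cm - cp) / (cp * cm)) := by
    rw [aPlus, aMinus, div_sub_div _ _ (cplus_ne Γ δ hΓ) (cminus_ne Γ δ hΓ)]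
    ring
  have hdiff : Complex.normSq (cm - cp) = 16 * δ^2 := by
    rw [hcm, hcp]; simp [Complex.normSq_apply]; ring
  rw [key, Complex.sq_norm, Complex.normSq_mul, Complex.normSq_div, Complex.normSq_mul,
    hdiff, normSq_cplus, normSq_cminus, Complex.normSq_ofReal]
  ring

lemma norm_postVec_sq (Γ β δ : ℝ) :
    ‖postVec Γ β δ‖ ^ 2
      = 2 * (lorentzEnvelope β 0 ^ 2 / (Γ^2/4 + 4*δ^2)) + 2 * (lorentzEnvelope β (2*δ) ^ 2 / (Γ^2/4)) := by
  have h : ‖postVec Γ β δ‖ ^ 2 = ∑ i : Fin 4, ‖postVec Γ β δ i‖ ^ 2 := by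
    rw [EuclideanSpace.norm_eq, Real.sq_sqrt (by positivity)]
  rw [h, Fin.sum_univ_four]
  have e0 : postVec Γ β δ 0 = aPlus Γ β δ := rfl
  have e1 : postVec Γ β δ 1 = bAmp Γ β δ := rfl
  have e2 : postVec Γ β δ 2 = bAmp Γ β δ := rfl
  have e3 : postVec Γ β δ 3 = aMinus Γ β δ := rfl
  rw [e0, e1, e2, e3]
  have ha : ‖aPlus Γ β δ‖ ^ 2 = lorentzEnvelope β 0 ^ 2 / (Γ^2/4 + 4*δ^2) := by
    rw [aPlus, Complex.sq_norm, Complex.normSq_div, normSq_cplus,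
      Complex.normSq_ofReal]; ring
  have hm : ‖aMinus Γ β δ‖ ^ 2 = lorentzEnvelope β 0 ^ 2 / (Γ^2/4 + 4*δ^2) := by
    rw [aMinus, Complex.sq_norm, Complex.normSq_div, normSq_cminus,
      Complex.normSq_ofReal]; ring
  have hb : ‖bAmp Γ β δ‖ ^ 2 = lorentzEnvelope β (2*δ) ^ 2 / (Γ^2/4) := by
    rw [bAmp, Complex.sq_norm, Complex.normSq_div, Complex.normSq_ofReal]
    have : Complex.normSq ((Γ:ℂ)/2) = Γ^2/4 := by simp [Complex.normSq_apply]; ring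
    rw [this]; ring
  rw [ha, hm, hb]; ring

lemma u0_sq (β : ℝ) (hβ : 0 < β) : lorentzEnvelope β 0 ^ 2 = 4 / (π * β) := by
  rw [lorentzEnvelope, Real.sq_sqrt (by positivity)]
  have hπ := Real.pi_pos
  field_simp
  ring

lemma ub_sq (β δ : ℝ) (hβ : 0 < β) (hδ : 0 < δ) :
    lorentzEnvelope β (2*δ) ^ 2 = β / (π * (β^2/4 + 4*δ^2)) := by
  rw [lorentzEnvelope, Real.sq_sqrt (by positivity)]
  have hπ := Real.pi_pos
  have hE : (β^2/4 + (2*δ)^2) ≠ 0 := by positivity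
  have hE2 : (β^2/4 + 4*δ^2) ≠ 0 := by positivity
  field_simp
  ring

lemma ratio_eq (Γ δ β : ℝ) (hΓ : 0 < Γ) (hδ : 0 < δ) (hβ : 0 < β) :
    ‖aPlus Γ β δ - aMinus Γ β δ‖ ^ 2 / (2 * ‖postVec Γ β δ‖ ^ 2)
      = (16*δ^2/((Γ^2/4+4*δ^2)^2)) / (4/(Γ^2/4+4*δ^2) + β^2/((β^2/4+4*δ^2)*(Γ^2/4))) := by
  rw [abs_diff_sq Γ β δ hΓ, norm_postVec_sq, u0_sq β hβ, ub_sq β δ hβ hδ]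
  have hπ := Real.pi_pos
  have hD : (Γ^2/4+4*δ^2) ≠ 0 := by positivity
  have hE : (β^2/4+4*δ^2) ≠ 0 := by positivity
  have hΓ' : Γ ≠ 0 := ne_of_gt hΓ
  have hβ' : β ≠ 0 := ne_of_gt hβ
  have hπ' : π ≠ 0 := ne_of_gt hπ
  field_simp
  ring

/-- In the iterated limit `β/Γ → 0` followed by `δ/Γ → ∞`, the normalized
post-selected two-photon state converges to the Bell state
`ψ⁻ = (|ω_a ω_a⟩ − |ω_b ω_b⟩)/√2`:
`lim_{δ→∞} lim_{β→0⁺} |a₊ − a₋|²/(2‖v‖²) = 1`. -/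
theorem postselected_state_bell_psi_minus (Γ : ℝ) (hΓ : 0 < Γ) :
    ∃ L : ℝ → ℝ,
      (∀ δ : ℝ, 0 < δ →
        Tendsto (fun β : ℝ =>
            ‖aPlus Γ β δ - aMinus Γ β δ‖ ^ 2 / (2 * ‖postVec Γ β δ‖ ^ 2))
          (nhdsWithin 0 (Set.Ioi 0)) (nhds (L δ)))
      ∧ Tendsto L atTop (nhds 1) := by
  refine ⟨fun δ => 4*δ^2/(Γ^2/4+4*δ^2), fun δ hδ => ?_, ?_⟩
  · have hD : (0:ℝ) < Γ^2/4+4*δ^2 := by positivity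
    have hc : ContinuousAt (fun β : ℝ =>
        (16*δ^2/((Γ^2/4+4*δ^2)^2)) / (4/(Γ^2/4+4*δ^2) + β^2/((β^2/4+4*δ^2)*(Γ^2/4)))) 0 := by
      apply ContinuousAt.div continuousAt_const
      · exact ContinuousAt.add continuousAt_const
          (ContinuousAt.div (by fun_prop) (by fun_prop) (by positivity))
      · have : (0:ℝ)^2/((0^2/4+4*δ^2)*(Γ^2/4)) = 0 := by norm_num
        rw [this]
        positivity
    have hval : (16*δ^2/((Γ^2/4+4*δ^2)^2)) / (4/(Γ^2/4+4*δ^2) + (0:ℝ)^2/((0^2/4+4*δ^2)*(Γ^2/4)))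
        = 4*δ^2/(Γ^2/4+4*δ^2) := by
      have hD' : (Γ^2/4+4*δ^2) ≠ 0 := ne_of_gt hD
      norm_num
      field_simp
      ring
    have ht := hc.tendsto.mono_left (nhdsWithin_le_nhds (s := Set.Ioi (0:ℝ)))
    rw [hval] at ht
    exact tendsto_nhdsWithin_congr (fun β hβ => (ratio_eq Γ δ β hΓ hδ hβ).symm) ht
  · have h1 : Tendsto (fun δ : ℝ => (Γ^2/4)/δ^2) atTop (nhds 0) :=
      Tendsto.div_atTop tendsto_const_nhds (tendsto_pow_atTop two_ne_zero)
    have h2 : Tendsto (fun δ : ℝ => 4/((Γ^2/4)/δ^2 + 4)) atTop (nhds 1) := by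
      have hden : Tendsto (fun δ : ℝ => (Γ^2/4)/δ^2 + 4) atTop (nhds (0+4)) :=
        h1.add tendsto_const_nhds
      have := Tendsto.div (tendsto_const_nhds (x := (4:ℝ))) hden (by norm_num)
      norm_num at this
      exact this
    refine Tendsto.congr' ?_ h2
    filter_upwards [eventually_gt_atTop 0] with δ hδ
    have hδ' : δ ≠ 0 := ne_of_gt hδ
    have hD : (Γ^2/4+4*δ^2) ≠ 0 := by positivity
    field_simp
end
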